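/- Let (f_{i,j,k}) (indexed by i,j,k ∈ ℤ with i+j+k even, k ≥ 0) be a solution of the octahedron recurrence f_{i,j,k-1}·f_{i,j,k+1} = f_{i-1,j,k}·f_{i+1,j,k} + λ·f_{i,j-1,k}·f_{i,j+1,k}, and let μ_l, ν_l be nonzero scalars for l ∈ ℤ. Define m_{i,j,k} = μ_{(i-j)/2}·ν_{(i+j)/2} for k = 0, m_{i,j,1} = 1, and m_{i,j,k} = ∏_{l=1}^{k-1} 1/(μ_{(i-j-k)/2+l}·ν_{(i+j-k)/2+l}) for k ≥ 2. Then g_{i,j,k} := m_{i,j,k}·f_{i,j,k} also satisfies the octahedron recurrence for all k ≥ 1. -/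

import Mathlib

open scoped BigOperators

lemma oct_aux2 (U : ℤ → ℂ) (a : ℤ) (k : ℕ) :
    (∏ l ∈ Finset.range k, U (a + 1 + l)) * (∏ l ∈ Finset.range (k + 2), U (a + l)) =
    (∏ l ∈ Finset.range (k + 1), U (a + l)) * (∏ l ∈ Finset.range (k + 1), U (a + 1 + l)) := by
  have hs : ∀ n : ℕ, (∏ l ∈ Finset.range (n + 1), U (a + l)) =
      (∏ l ∈ Finset.range n, U (a + 1 + l)) * U a := by
    intro n
    rw [Finset.prod_range_succ' (fun l => U (a + (l : ℤ))) n]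
    simp only [Nat.cast_add, Nat.cast_zero, Nat.cast_one]
    congr 1
    · exact Finset.prod_congr rfl fun l _ => by ring_nf
    · norm_num
  rw [hs (k + 1), hs k]
  ring

lemma oct_keyM (μ ν : ℤ → ℂ) (a b : ℤ) (n : ℕ) :
    (∏ l ∈ Finset.range n, (μ (a + 1 + l) * ν (b + 1 + l))⁻¹) *
      (∏ l ∈ Finset.range (n + 2), (μ (a + l) * ν (b + l))⁻¹) =
    (∏ l ∈ Finset.range (n + 1), (μ (a + l) * ν (b + l))⁻¹) *
      (∏ l ∈ Finset.range (n + 1), (μ (a + 1 + l) * ν (b + 1 + l))⁻¹) := by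
  simp only [mul_inv, Finset.prod_mul_distrib]
  have h1 := oct_aux2 (fun x => (μ x)⁻¹) a n
  have h2 := oct_aux2 (fun x => (ν x)⁻¹) b n
  calc ((∏ l ∈ Finset.range n, (μ (a + 1 + l))⁻¹) * ∏ l ∈ Finset.range n, (ν (b + 1 + l))⁻¹) *
        ((∏ l ∈ Finset.range (n + 2), (μ (a + l))⁻¹) * ∏ l ∈ Finset.range (n + 2), (ν (b + l))⁻¹)
      = ((∏ l ∈ Finset.range n, (μ (a + 1 + l))⁻¹) * ∏ l ∈ Finset.range (n + 2), (μ (a + l))⁻¹) *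
        ((∏ l ∈ Finset.range n, (ν (b + 1 + l))⁻¹) * ∏ l ∈ Finset.range (n + 2), (ν (b + l))⁻¹) := by ring
    _ = ((∏ l ∈ Finset.range (n + 1), (μ (a + l))⁻¹) * ∏ l ∈ Finset.range (n + 1), (μ (a + 1 + l))⁻¹) *
        ((∏ l ∈ Finset.range (n + 1), (ν (b + l))⁻¹) * ∏ l ∈ Finset.range (n + 1), (ν (b + 1 + l))⁻¹) := by
          rw [h1, h2]
    _ = _ := by ring

lemma oct_keyN (μ ν : ℤ → ℂ) (a b : ℤ) (n : ℕ) :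
    (∏ l ∈ Finset.range n, (μ (a + 1 + l) * ν (b + 1 + l))⁻¹) *
      (∏ l ∈ Finset.range (n + 2), (μ (a + l) * ν (b + l))⁻¹) =
    (∏ l ∈ Finset.range (n + 1), (μ (a + 1 + l) * ν (b + l))⁻¹) *
      (∏ l ∈ Finset.range (n + 1), (μ (a + l) * ν (b + 1 + l))⁻¹) := by
  simp only [mul_inv, Finset.prod_mul_distrib]
  have h1 := oct_aux2 (fun x => (μ x)⁻¹) a n
  have h2 := oct_aux2 (fun x => (ν x)⁻¹) b n
  calc ((∏ l ∈ Finset.range n, (μ (a + 1 + l))⁻¹) * ∏ l ∈ Finset.range n, (ν (b + 1 + l))⁻¹) *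
        ((∏ l ∈ Finset.range (n + 2), (μ (a + l))⁻¹) * ∏ l ∈ Finset.range (n + 2), (ν (b + l))⁻¹)
      = ((∏ l ∈ Finset.range n, (μ (a + 1 + l))⁻¹) * ∏ l ∈ Finset.range (n + 2), (μ (a + l))⁻¹) *
        ((∏ l ∈ Finset.range n, (ν (b + 1 + l))⁻¹) * ∏ l ∈ Finset.range (n + 2), (ν (b + l))⁻¹) := by ring
    _ = ((∏ l ∈ Finset.range (n + 1), (μ (a + l))⁻¹) * ∏ l ∈ Finset.range (n + 1), (μ (a + 1 + l))⁻¹) *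
        ((∏ l ∈ Finset.range (n + 1), (ν (b + l))⁻¹) * ∏ l ∈ Finset.range (n + 1), (ν (b + 1 + l))⁻¹) := by
          rw [h1, h2]
    _ = _ := by ring

/-- Rescaling a solution of the octahedron recurrence by the multipliers `m_{i,j,k}`
yields another solution. -/
theorem devron_stmt_5 (lam : ℂ) (hlam : lam ≠ 0)
    (f : ℤ → ℤ → ℕ → ℂ)
    (hf : ∀ (i j : ℤ) (k : ℕ), Odd (i + j + (k + 1 : ℤ)) →
      f i j k * f i j (k + 2) =
        f (i - 1) j (k + 1) * f (i + 1) j (k + 1) +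
          lam * f i (j - 1) (k + 1) * f i (j + 1) (k + 1))
    (μ ν : ℤ → ℂ) (hμ : ∀ l, μ l ≠ 0) (hν : ∀ l, ν l ≠ 0)
    (m : ℤ → ℤ → ℕ → ℂ)
    (hm0 : ∀ i j : ℤ, Even (i + j) → m i j 0 = μ ((i - j) / 2) * ν ((i + j) / 2))
    (hm1 : ∀ i j : ℤ, m i j 1 = 1)
    (hm2 : ∀ (i j : ℤ) (k : ℕ), 2 ≤ k →
      m i j k = ∏ l ∈ Finset.range (k - 1),
        (μ ((i - j - (k : ℤ)) / 2 + (l + 1)) * ν ((i + j - (k : ℤ)) / 2 + (l + 1)))⁻¹) :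
    ∀ (i j : ℤ) (k : ℕ), Odd (i + j + (k + 1 : ℤ)) →
      (m i j k * f i j k) * (m i j (k + 2) * f i j (k + 2)) =
        (m (i - 1) j (k + 1) * f (i - 1) j (k + 1)) *
            (m (i + 1) j (k + 1) * f (i + 1) j (k + 1)) +
          lam * (m i (j - 1) (k + 1) * f i (j - 1) (k + 1)) *
            (m i (j + 1) (k + 1) * f i (j + 1) (k + 1)) := by
  have hm' : ∀ (i j : ℤ) (k : ℕ), 1 ≤ k →
      m i j k = ∏ l ∈ Finset.range (k - 1),
        (μ ((i - j - (k : ℤ)) / 2 + (l + 1)) * ν ((i + j - (k : ℤ)) / 2 + (l + 1)))⁻¹ := by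
    intro i j k hk
    rcases Nat.lt_or_ge k 2 with h | h
    · interval_cases k
      simp [hm1]
    · exact hm2 i j k h
  intro i j k hodd
  have hrec := hf i j k hodd
  rw [Int.odd_iff] at hodd
  match k with
  | 0 =>
    have hev : Even (i + j) := by rw [Int.even_iff]; omega
    have e0 := hm0 i j hev
    have e2 : m i j 2 = (μ ((i - j) / 2) * ν ((i + j) / 2))⁻¹ := by
      rw [hm2 i j 2 le_rfl]
      rw [show (2:ℕ) - 1 = 1 from rfl, Finset.prod_range_one]
      congr 3 <;> push_cast <;> omega
    have hprod : m i j 0 * m i j 2 = 1 := by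
      rw [e0, e2]
      exact mul_inv_cancel₀ (mul_ne_zero (hμ _) (hν _))
    rw [hm1, hm1, hm1, hm1]
    linear_combination (f i j 0 * f i j 2) * hprod + hrec
  | Nat.succ n =>
    obtain ⟨a, ha⟩ : ∃ a : ℤ, i - j - (n + 1 : ℤ) = 2 * a := ⟨(i - j - (n+1:ℤ)) / 2, by omega⟩
    obtain ⟨b, hb⟩ : ∃ b : ℤ, i + j - (n + 1 : ℤ) = 2 * b := ⟨(i + j - (n+1:ℤ)) / 2, by omega⟩
    have E1 : m i j (n + 1) = ∏ l ∈ Finset.range n, (μ (a + 1 + l) * ν (b + 1 + l))⁻¹ := by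
      rw [hm' i j (n + 1) (by omega)]
      refine Finset.prod_congr (by norm_num) fun l _ => ?_
      congr 3 <;> push_cast <;> omega
    have E2 : m i j (n + 1 + 2) = ∏ l ∈ Finset.range (n + 2), (μ (a + l) * ν (b + l))⁻¹ := by
      rw [hm' i j (n + 3) (by omega)]
      refine Finset.prod_congr (by norm_num) fun l _ => ?_
      congr 3 <;> push_cast <;> omega
    have E3 : m (i - 1) j (n + 1 + 1) = ∏ l ∈ Finset.range (n + 1), (μ (a + l) * ν (b + l))⁻¹ := by
      rw [hm' (i - 1) j (n + 2) (by omega)]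
      refine Finset.prod_congr (by norm_num) fun l _ => ?_
      congr 3 <;> push_cast <;> omega
    have E4 : m (i + 1) j (n + 1 + 1) = ∏ l ∈ Finset.range (n + 1), (μ (a + 1 + l) * ν (b + 1 + l))⁻¹ := by
      rw [hm' (i + 1) j (n + 2) (by omega)]
      refine Finset.prod_congr (by norm_num) fun l _ => ?_
      congr 3 <;> push_cast <;> omega
    have E5 : m i (j - 1) (n + 1 + 1) = ∏ l ∈ Finset.range (n + 1), (μ (a + 1 + l) * ν (b + l))⁻¹ := by
      rw [hm' i (j - 1) (n + 2) (by omega)]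
      refine Finset.prod_congr (by norm_num) fun l _ => ?_
      congr 3 <;> push_cast <;> omega
    have E6 : m i (j + 1) (n + 1 + 1) = ∏ l ∈ Finset.range (n + 1), (μ (a + l) * ν (b + 1 + l))⁻¹ := by
      rw [hm' i (j + 1) (n + 2) (by omega)]
      refine Finset.prod_congr (by norm_num) fun l _ => ?_
      congr 3 <;> push_cast <;> omega
    have h1 : m i j (n + 1) * m i j (n + 1 + 2) =
        m (i - 1) j (n + 1 + 1) * m (i + 1) j (n + 1 + 1) := by
      rw [E1, E2, E3, E4]; exact oct_keyM μ ν a b n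
    have h2 : m i j (n + 1) * m i j (n + 1 + 2) =
        m i (j - 1) (n + 1 + 1) * m i (j + 1) (n + 1 + 1) := by
      rw [E1, E2, E5, E6]; exact oct_keyN μ ν a b n
    linear_combination (m i j (n + 1) * m i j (n + 1 + 2)) * hrec +
      (f (i - 1) j (n + 1 + 1) * f (i + 1) j (n + 1 + 1)) * h1 +
      (lam * f i (j - 1) (n + 1 + 1) * f i (j + 1) (n + 1 + 1)) * h2
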